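/- Let μ ∈ (0,1/2) and λ = 1/√5. There exists an integer N ≥ 2, depending only on μ, such that for every r₀ > 0, setting r = N r₀ and γ(t) = (r cos t, r sin t, μ r t) (so γ'(t) = (−r sin t, r cos t, μ r)), one has: for every τ ∈ ℝ and every point p = (r₀ cos θ, r₀ sin θ, z) with θ, z ∈ ℝ, ⟨γ'(τ), p − γ(τ)⟩ ≤ λ‖γ'(τ)‖‖p − γ(τ)‖; that is, the open cone of half-aperture arccos(1/√5) with vertex γ(τ) directed by γ'(τ) does not meet the thin cylinder {(x,y,z) : x² + y² = r₀²}. -/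

import Mathlib

open scoped RealInnerProductSpace
open Set

/-- The helix `t ↦ (r cos t, r sin t, μ r t)` in `ℝ³`. -/
noncomputable def helix (r μ t : ℝ) : EuclideanSpace ℝ (Fin 3) :=
  WithLp.toLp 2 ![r * Real.cos t, r * Real.sin t, μ * r * t]

/-- The derivative `t ↦ (−r sin t, r cos t, μ r)` of the helix. -/
noncomputable def helixD (r μ t : ℝ) : EuclideanSpace ℝ (Fin 3) :=
  WithLp.toLp 2 ![-(r * Real.sin t), r * Real.cos t, μ * r]

/-- A point `(r₀ cos θ, r₀ sin θ, z)` of the thin cylinder of radius `r₀`. -/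
noncomputable def cylPt (r₀ θ z : ℝ) : EuclideanSpace ℝ (Fin 3) :=
  WithLp.toLp 2 ![r₀ * Real.cos θ, r₀ * Real.sin θ, z]

/-- The key algebraic inequality. -/
lemma helix_key (μ r₀ s c w n : ℝ) (hμ0 : 0 < μ) (hμ : μ < 1/2) (hr₀ : 0 < r₀)
    (hsc : s^2 + c^2 = 1) (hn : 5 ≤ (1 - 4*μ^2) * (n - 1)) :
    5 * (r₀*s + μ*w)^2 ≤ (1+μ^2) * (r₀^2 + (n*r₀)^2 - 2*(n*r₀)*r₀*c + w^2) := by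
  have hb : 0 < 1 - 4*μ^2 := by nlinarith
  have hc1 : c ≤ 1 := by nlinarith [sq_nonneg s]
  have hs1 : s^2 ≤ 1 := by nlinarith [sq_nonneg c]
  have hn1 : (1:ℝ) ≤ n - 1 := by nlinarith
  have cauchy := sq_nonneg (5*μ*(r₀*s) - (1-4*μ^2)*w)
  have step : 5 * r₀^2 * s^2 ≤ (1-4*μ^2) * (r₀^2 + (n*r₀)^2 - 2*(n*r₀)*r₀*c) := by
    have h1 : (n*r₀ - r₀)^2 ≤ r₀^2 + (n*r₀)^2 - 2*(n*r₀)*r₀*c := by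
      nlinarith [mul_pos (lt_of_lt_of_le one_pos (by linarith : (1:ℝ) ≤ n)) hr₀]
    have h2 : 5 * r₀^2 ≤ (1-4*μ^2) * (n*r₀ - r₀)^2 := by
      nlinarith [sq_nonneg r₀, mul_le_mul_of_nonneg_right hn (le_of_lt (mul_pos hr₀ hr₀)),
        sq_nonneg ((n-1)*r₀)]
    nlinarith [mul_le_mul_of_nonneg_left h1 hb.le,
      mul_le_mul_of_nonneg_left hs1 (by positivity : (0:ℝ) ≤ 5*r₀^2)]
  have hμ2 : (0:ℝ) ≤ 1 + μ^2 := by positivity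
  have final : (1-4*μ^2) * (5 * (r₀*s + μ*w)^2) ≤
      (1-4*μ^2) * ((1+μ^2) * (r₀^2 + (n*r₀)^2 - 2*(n*r₀)*r₀*c + w^2)) := by
    nlinarith [cauchy, mul_le_mul_of_nonneg_left step hμ2]
  exact le_of_mul_le_mul_left final hb

/-- Reduction to the squared inequality. -/
lemma helix_aux (I A B : ℝ) (hA : 0 ≤ A) (_hB : 0 ≤ B) (h : 5 * I^2 ≤ A * B) :
    I ≤ 1 / Real.sqrt 5 * Real.sqrt A * Real.sqrt B := by
  rcases le_or_gt I 0 with hI | hI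
  · exact hI.trans (by positivity)
  · have h5 : (0:ℝ) < Real.sqrt 5 := Real.sqrt_pos.mpr (by norm_num)
    have : 1 / Real.sqrt 5 * Real.sqrt A * Real.sqrt B = Real.sqrt (1/5 * (A*B)) := by
      rw [Real.sqrt_mul (by norm_num : (0:ℝ) ≤ 1/5), Real.sqrt_mul hA,
        show (1:ℝ)/5 = (Real.sqrt 5)⁻¹^2 by
          rw [← Real.sqrt_inv]; rw [Real.sq_sqrt (by norm_num : (0:ℝ) ≤ 5⁻¹)]; norm_num,
        Real.sqrt_sq (by positivity)]
      ring
    rw [this]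
    rw [show Real.sqrt (1/5*(A*B)) = Real.sqrt (1/5*(A*B)) from rfl]
    exact Real.le_sqrt' hI |>.mpr (by nlinarith)

/-- For `μ ∈ (0,1/2)` and `λ = 1/√5`, there is an integer `N ≥ 2`
(depending only on `μ`) such that, for `r = N r₀`, the open cone of half-aperture
`arccos(1/√5)` attached to the helix of radius `r` at any of its points does not meet the
thin cylinder `{x² + y² = r₀²}`. -/
theorem helix_cone_avoids_thin_cylinder (μ : ℝ) (hμ0 : 0 < μ) (hμ : μ < 1 / 2) :
    ∃ N : ℕ, 2 ≤ N ∧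
      ∀ r₀ : ℝ, 0 < r₀ →
        ∀ τ θ z : ℝ,
          ⟪helixD ((N : ℝ) * r₀) μ τ, cylPt r₀ θ z - helix ((N : ℝ) * r₀) μ τ⟫ ≤
            (1 / Real.sqrt 5) * ‖helixD ((N : ℝ) * r₀) μ τ‖ *
              ‖cylPt r₀ θ z - helix ((N : ℝ) * r₀) μ τ‖ := by
  have hb : 0 < 1 - 4*μ^2 := by nlinarith
  have hpos : (0:ℝ) < 5/(1-4*μ^2) := by positivity
  refine ⟨⌈5/(1-4*μ^2)⌉₊ + 1, ?_, ?_⟩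
  · have := Nat.ceil_pos.mpr hpos
    omega
  intro r₀ hr₀ τ θ z
  set N : ℕ := ⌈5/(1-4*μ^2)⌉₊ + 1 with hNdef
  have hn : 5 ≤ (1-4*μ^2) * ((N:ℝ) - 1) := by
    have h1 : 5/(1-4*μ^2) ≤ (⌈5/(1-4*μ^2)⌉₊ : ℝ) := Nat.le_ceil _
    have h2 : ((N:ℝ) - 1) = (⌈5/(1-4*μ^2)⌉₊ : ℝ) := by
      rw [hNdef]; push_cast; ring
    rw [h2]
    calc (5:ℝ) = (1-4*μ^2) * (5/(1-4*μ^2)) := by field_simp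
    _ ≤ _ := mul_le_mul_of_nonneg_left h1 hb.le
  have hτ := Real.sin_sq_add_cos_sq τ
  have hθ := Real.sin_sq_add_cos_sq θ
  simp only [helix, helixD, cylPt, PiLp.inner_apply, EuclideanSpace.norm_eq,
    Fin.sum_univ_three, PiLp.sub_apply, Matrix.cons_val_zero, Matrix.cons_val_one,
    Matrix.head_cons, Matrix.cons_val_two, Matrix.tail_cons, RCLike.inner_apply,
    conj_trivial, Real.norm_eq_abs, sq_abs]
  apply helix_aux _ _ _ (by positivity) (by positivity)
  have hkey := helix_key μ r₀ (Real.sin θ * Real.cos τ - Real.cos θ * Real.sin τ)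
    (Real.cos θ * Real.cos τ + Real.sin θ * Real.sin τ) (z - μ * ((N:ℝ)*r₀) * τ) (N:ℝ)
    hμ0 (by linarith) hr₀ (by linear_combination (Real.sin θ^2 + Real.cos θ^2) * hτ + hθ) hn
  have hr2 := mul_le_mul_of_nonneg_left hkey (sq_nonneg ((N:ℝ)*r₀))
  have eA : (-(↑N * r₀ * Real.sin τ)) ^ 2 + (↑N * r₀ * Real.cos τ) ^ 2 + (μ * (↑N * r₀)) ^ 2
      = ((N:ℝ)*r₀)^2 * (1+μ^2) := by
    linear_combination ((N:ℝ)*r₀)^2 * hτ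
  have eB : (r₀ * Real.cos θ - ↑N * r₀ * Real.cos τ) ^ 2 +
        (r₀ * Real.sin θ - ↑N * r₀ * Real.sin τ) ^ 2 + (z - μ * (↑N * r₀) * τ) ^ 2
      = r₀ ^ 2 + (↑N * r₀) ^ 2 -
          2 * (↑N * r₀) * r₀ * (Real.cos θ * Real.cos τ + Real.sin θ * Real.sin τ) +
          (z - μ * (↑N * r₀) * τ) ^ 2 := by
    linear_combination r₀^2 * hθ + ((N:ℝ)*r₀)^2 * hτ
  rw [eA, eB]
  nlinarith [hr2]
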